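/- For every n ≥ 0 and every word v of length n over {a,b}: |ψ(v)| ≤ |ψ(v^(n))| = F_{n+1} − 2, with equality if and only if v = v^(n) or v = E(v^(n)). -/
import Mathlib


def palClosure (w : List Bool) : List Bool :=
  let k := Nat.find (p := fun k => (w.drop k).reverse = w.drop k)
    ⟨w.length, by simp⟩
  w.take k ++ w.drop k ++ (w.take k).reverse

def psi (v : List Bool) : List Bool := v.foldl (fun w x => palClosure (w ++ [x])) []

def E (v : List Bool) : List Bool := v.map (!·)

def mu (x : Bool) (w : List Bool) : List Bool := w.flatMap (fun y => if y = x then [x] else [x, y])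

def muW : List Bool → List Bool → List Bool
  | [], w => w
  | x :: v, w => mu x (muW v w)

def vN (n : ℕ) : List Bool := (List.range n).map (fun i => decide (i % 2 = 1))

def fibF : ℕ → ℕ
  | 0 => 1
  | 1 => 1
  | n + 2 => fibF (n + 1) + fibF n

def HasPeriod (w : List Bool) (p : ℕ) : Prop :=
  0 < p ∧ ∀ i j (hi : i < w.length) (hj : j < w.length),
    i % p = j % p → w.get ⟨i, hi⟩ = w.get ⟨j, hj⟩

noncomputable def minPeriod (w : List Bool) : ℕ := sInf {p | HasPeriod w p}

def dOp : List Bool → List Bool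
  | x :: y :: u => y :: x :: u
  | w => w

def cOp (v : List Bool) : List Bool := (dOp v.reverse).reverse

def contAux : List ℕ → ℕ
  | [] => 1
  | [a] => a
  | a :: b :: t => a * contAux (b :: t) + contAux t

namespace S10

lemma palClosure_spec (w : List Bool) :
    ∃ k, k ≤ w.length ∧ (w.drop k).reverse = w.drop k ∧
      (∀ j < k, ¬ (w.drop j).reverse = w.drop j) ∧
      palClosure w = w ++ (w.take k).reverse := by
  have hex : ∃ k, (w.drop k).reverse = w.drop k := ⟨w.length, by simp⟩
  refine ⟨Nat.find hex, Nat.find_le (by simp), Nat.find_spec hex, fun j hj => Nat.find_min hex hj, ?_⟩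
  show w.take _ ++ w.drop _ ++ _ = _
  rw [List.take_append_drop]

lemma palClosure_length_of (w : List Bool) (k : ℕ)
    (hk : k ≤ w.length) (hp : (w.drop k).reverse = w.drop k)
    (hmin : ∀ j < k, ¬ (w.drop j).reverse = w.drop j) :
    (palClosure w).length = w.length + k := by
  obtain ⟨k', hk', hp', hmin', heq⟩ := palClosure_spec w
  have : k' = k := by
    rcases lt_trichotomy k' k with h | h | h
    · exact absurd hp' (hmin _ h)
    · exact h
    · exact absurd hp (hmin' _ h)
  subst this
  simp [heq, List.length_take, Nat.min_eq_left hk]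

lemma psi_concat (v : List Bool) (x : Bool) :
    psi (v ++ [x]) = palClosure (psi v ++ [x]) := by
  simp [psi, List.foldl_append]

lemma prefix_palClosure (w : List Bool) : w <+: palClosure w := by
  obtain ⟨k, _, _, _, heq⟩ := palClosure_spec w
  rw [heq]; exact List.prefix_append _ _

lemma psi_concat_prefix (v : List Bool) (x : Bool) :
    psi v ++ [x] <+: psi (v ++ [x]) := by
  rw [psi_concat]; exact prefix_palClosure _

lemma palClosure_pal (w : List Bool) : (palClosure w).reverse = palClosure w := by
  obtain ⟨k, hk, hp, _, heq⟩ := palClosure_spec w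
  have hrev : w.reverse = w.drop k ++ (w.take k).reverse := by
    conv_lhs => rw [← List.take_append_drop k w]
    rw [List.reverse_append, hp]
  rw [heq, List.reverse_append, List.reverse_reverse, hrev, ← List.append_assoc,
    List.take_append_drop]

lemma psi_pal (v : List Bool) : (psi v).reverse = psi v := by
  induction v using List.reverseRecOn with
  | nil => simp [psi]
  | append_singleton v x ih => rw [psi_concat]; exact palClosure_pal _

lemma psi_prefix_mono {u v : List Bool} (h : u <+: v) : psi u <+: psi v := by
  induction v using List.reverseRecOn with
  | nil => simp_all
  | append_singleton v x ih =>
    rcases List.prefix_concat_iff.mp h with h | h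
    · exact h ▸ List.prefix_refl _
    · exact (ih h).trans ((psi v).prefix_append [x] |>.trans (psi_concat_prefix v x))

lemma psi_length_lt {u v : List Bool} {x : Bool} (h : u ++ [x] <+: v) :
    (psi u).length < (psi v).length := by
  have h1 := psi_concat_prefix u x
  have h2 := psi_prefix_mono h
  have := (h1.trans h2).length_le
  simp at this; omega

lemma exists_next {u v : List Bool} (h : u <+: v) (hne : u ≠ v) :
    ∃ y, u ++ [y] <+: v := by
  obtain ⟨t, rfl⟩ := h
  cases t with
  | nil => simp at hne
  | cons y t => exact ⟨y, by simp⟩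

/-- palindromic prefixes of psi v are exactly psi of prefixes -/
lemma pal_prefix_psi (v : List Bool) :
    ∀ Q, Q <+: psi v → Q.reverse = Q → ∃ u, u <+: v ∧ Q = psi u := by
  induction v using List.reverseRecOn with
  | nil =>
    intro Q hQ _
    refine ⟨[], List.prefix_refl _, ?_⟩
    simpa [psi] using List.prefix_nil.mp (by simpa [psi] using hQ)
  | append_singleton v x ih =>
    intro Q hQ hQpal
    obtain ⟨k, hk, hp, hmin, heq⟩ := palClosure_spec (psi v ++ [x])
    set w' : List Bool := psi v ++ [x] with hw'
    have hP : psi (v ++ [x]) = w' ++ (w'.take k).reverse := by rw [psi_concat]; exact heq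
    have hPlen : (psi (v ++ [x])).length = w'.length + k := by
      rw [hP]; simp [List.length_take, Nat.min_eq_left hk]
    by_cases hle : Q.length ≤ (psi v).length
    · -- Q is a palindromic prefix of psi v
      have hpre : Q <+: psi v := by
        refine List.prefix_of_prefix_length_le hQ ?_ (by simpa using hle)
        exact ((psi v).prefix_append [x]).trans (psi_concat_prefix v x)
      obtain ⟨u, hu, rfl⟩ := ih Q hpre hQpal
      exact ⟨u, hu.trans ((v.prefix_append [x])), rfl⟩
    by_cases hfull : Q.length = (psi (v ++ [x])).length
    · exact ⟨v ++ [x], List.prefix_refl _, List.IsPrefix.eq_of_length hQ hfull⟩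
    -- contradiction case
    exfalso
    push_neg at hle
    have hQlt : Q.length < w'.length + k := by
      rw [← hPlen]; exact lt_of_le_of_ne hQ.length_le hfull
    have hw'len : w'.length = (psi v).length + 1 := by simp [hw']
    have hw'Q : w' <+: Q := by
      refine List.prefix_of_prefix_length_le ?_ hQ (by omega)
      rw [hP]; exact List.prefix_append _ _
    obtain ⟨t, rfl⟩ := hw'Q
    have htk : t.length < k := by simp at hQlt; omega
    have htw : t.length ≤ w'.length := by omega
    have e1 : t.reverse ++ w'.reverse = w' ++ t := by
      rw [← List.reverse_append]; exact hQpal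
    have e2 : w'.reverse = w'.drop t.length ++ t := by
      have := congrArg (List.drop t.length) e1
      rwa [List.drop_left' (by simp), List.drop_append_of_le_length htw] at this
    have e3 : w' = t.reverse ++ (w'.drop t.length).reverse := by
      have := congrArg List.reverse e2
      rwa [List.reverse_reverse, List.reverse_append] at this
    have e4 := congrArg (List.drop t.length) e3
    rw [List.drop_left' (l₁ := t.reverse) (l₂ := (w'.drop t.length).reverse) (by simp)] at e4
    exact hmin t.length htk e4.symm

end S10

namespace S10x
open S10
/-- last-occurrence search on the reversed word -/
def lpAux : List Bool → Bool → Option (List Bool)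
  | [], _ => none
  | y :: r, x => if y = x then some r.reverse else lpAux r x

lemma lpAux_some {r : List Bool} {x : Bool} {u : List Bool}
    (h : lpAux r x = some u) : u ++ [x] <+: r.reverse := by
  induction r with
  | nil => simp [lpAux] at h
  | cons y r ih =>
    by_cases hyx : y = x
    · simp [lpAux, hyx] at h
      subst h hyx
      simp
    · simp [lpAux, hyx] at h
      exact (ih h).trans (by simp)

lemma lpAux_max {r : List Bool} {x : Bool} {u u' : List Bool}
    (h : lpAux r x = some u) (h' : u' ++ [x] <+: r.reverse) : u'.length ≤ u.length := by
  induction r with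
  | nil => simp at h'
  | cons y r ih =>
    simp only [List.reverse_cons] at h'
    by_cases hyx : y = x
    · simp [lpAux, hyx] at h
      have := h'.length_le
      simp [← h] at *
      omega
    · simp [lpAux, hyx] at h
      rcases List.prefix_concat_iff.mp h' with h2 | h2
      · exfalso
        have := congrArg (fun l => l.getLast?) h2
        simp at this
        exact hyx this.symm
      · exact ih h h2

lemma lpAux_none {r : List Bool} {x : Bool} {u' : List Bool}
    (h : lpAux r x = none) (h' : u' ++ [x] <+: r.reverse) : False := by
  induction r with
  | nil => simp at h'
  | cons y r ih =>
    simp only [List.reverse_cons] at h'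
    by_cases hyx : y = x
    · simp [lpAux, hyx] at h
    · simp [lpAux, hyx] at h
      rcases List.prefix_concat_iff.mp h' with h2 | h2
      · exfalso
        have := congrArg (fun l => l.getLast?) h2
        simp at this
        exact hyx this.symm
      · exact ih h h2

/-- m(v,x): 0 if x doesn't occur in v, else |psi(u*)|+1 for the longest u* with u*x ≤ v -/
def mm (v : List Bool) (x : Bool) : ℕ :=
  match lpAux v.reverse x with
  | none => 0
  | some u => (psi u).length + 1

lemma mm_concat_same (v : List Bool) (x : Bool) : mm (v ++ [x]) x = (psi v).length + 1 := by
  simp [mm, lpAux]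

lemma mm_concat_ne (v : List Bool) (x y : Bool) (h : y ≠ x) : mm (v ++ [y]) x = mm v x := by
  simp [mm, lpAux, h]

lemma mm_nil (x : Bool) : mm [] x = 0 := rfl

end S10x

namespace S10y
open S10 S10x

/-- every palindromic suffix of psi v ++ [x] of length ≥ 2 comes from some u with u·x ≤ v -/
lemma pal_suffix_structure (v : List Bool) (x : Bool) {s : List Bool}
    (hs : s <:+ psi v ++ [x]) (hpal : s.reverse = s) (hlen : 2 ≤ s.length) :
    ∃ u, u ++ [x] <+: v ∧ (psi u).length + 2 = s.length := by
  -- s is a palindrome, so s is a prefix of (psi v ++ [x]).reverse = x :: psi v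
  have hs' : s <+: x :: psi v := by
    have := List.reverse_prefix.mpr hs
    rwa [hpal, List.reverse_append, psi_pal] at this
  obtain ⟨c, s₁, rfl⟩ : ∃ c s₁, s = c :: s₁ := by
    cases s with
    | nil => simp at hlen
    | cons c s₁ => exact ⟨c, s₁, rfl⟩
  obtain ⟨rfl, hs₁⟩ := List.cons_prefix_cons.mp hs'
  -- from the palindrome equation, s₁ = t ++ [c] with t a palindrome
  have e : s₁.reverse ++ [c] = c :: s₁ := by
    have := hpal
    rwa [List.reverse_cons] at this
  obtain ⟨c', r', hr⟩ : ∃ c' r', s₁.reverse = c' :: r' := by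
    cases hsr : s₁.reverse with
    | nil =>
      exfalso
      have h0 : s₁ = [] := by simpa using congrArg List.reverse hsr
      rw [h0] at hlen
      simp at hlen
    | cons c' r' => exact ⟨c', r', rfl⟩
  rw [hr] at e
  have hs₁r : s₁ = r'.reverse ++ [c'] := by
    have := congrArg List.reverse hr
    simpa using this
  obtain ⟨hc'x, e2⟩ : c' = c ∧ r' ++ [c] = s₁ := by
    simpa using e
  subst hc'x
  rw [hs₁r] at e2
  have hr'pal : r' = r'.reverse := List.append_cancel_right e2
  have hts : s₁ = r' ++ [c'] := by rw [hs₁r, ← hr'pal]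
  -- r' is a palindromic prefix of psi v
  have htpre : r' ++ [c'] <+: psi v := hts ▸ hs₁
  have hr'pre : r' <+: psi v := (r'.prefix_append [c']).trans htpre
  obtain ⟨u, hu, hpsiu⟩ := pal_prefix_psi v r' hr'pre hr'pal.symm
  -- u is a proper prefix of v
  have hlt : (psi u).length < (psi v).length := by
    have := htpre.length_le
    simp [← hpsiu] at *
    omega
  have hune : u ≠ v := fun h => by rw [h] at hlt; omega
  obtain ⟨y, hy⟩ := exists_next hu hune
  have hxy : c' = y := by
    have p1 : psi u ++ [c'] <+: psi v := hpsiu ▸ htpre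
    have p2 : psi u ++ [y] <+: psi v := (psi_concat_prefix u y).trans (psi_prefix_mono hy)
    have := List.IsPrefix.eq_of_length (List.prefix_of_prefix_length_le p1 p2 (by simp)) (by simp)
    have := List.append_cancel_left this
    simpa using this
  refine ⟨u, hxy ▸ hy, ?_⟩
  simp [hpsiu, hts]

lemma psi_concat_length (v : List Bool) (x : Bool) :
    (psi (v ++ [x])).length + mm v x = 2 * (psi v).length + 1 := by
  rw [psi_concat]
  set w : List Bool := psi v with hw
  cases hl : lpAux v.reverse x with
  | none =>
    have hlen : (palClosure (w ++ [x])).length = (w ++ [x]).length + w.length := by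
      apply palClosure_length_of
      · simp
      · rw [List.drop_left]; simp
      · intro j hj hpalj
        have hj' : j < (w ++ [x]).length := by simp; omega
        obtain ⟨u, hu, _⟩ := pal_suffix_structure v x (s := (w ++ [x]).drop j)
          (List.drop_suffix j _) hpalj (by simp; omega)
        exact lpAux_none hl (by simpa using hu)
    rw [hlen]
    simp [mm, hl]
    omega
  | some u' =>
    have hu' : u' ++ [x] <+: v := by simpa using lpAux_some hl
    set L := (psi u').length with hL
    have hLlt : L < w.length := psi_length_lt hu'
    -- the suffix [x] ++ psi u' ++ [x]
    have hsuf : ([x] ++ psi u') ++ [x] <:+ w ++ [x] := by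
      have h1 : psi u' ++ [x] <+: w := (psi_concat_prefix u' x).trans (psi_prefix_mono hu')
      have h2 : [x] ++ psi u' <:+ w := by
        have := List.reverse_suffix.mpr h1
        rwa [List.reverse_append, psi_pal, hw, psi_pal] at this
      obtain ⟨p, hp2⟩ := h2
      exact ⟨p, by rw [← hp2]; simp⟩
    obtain ⟨pre, hpre⟩ := hsuf
    have hprelen : pre.length = w.length - 1 - L := by
      have := congrArg List.length hpre
      simp at this
      omega
    have hdrop : (w ++ [x]).drop (w.length - 1 - L) = ([x] ++ psi u') ++ [x] := by
      rw [← hpre, ← hprelen, List.drop_left]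
    have hlen : (palClosure (w ++ [x])).length = (w ++ [x]).length + (w.length - 1 - L) := by
      apply palClosure_length_of
      · simp; omega
      · rw [hdrop]; simp [psi_pal]
      · intro j hj hpalj
        obtain ⟨u, hu, hul⟩ := pal_suffix_structure v x (s := (w ++ [x]).drop j)
          (List.drop_suffix j _) hpalj (by simp; omega)
        -- maximality: |psi u| ≤ L, but |psi u| + 2 = |w|+1-j > L+2
        have hmax : u.length ≤ u'.length := lpAux_max hl (by simpa using hu)
        have hup : u <+: u' := by
          refine List.prefix_of_prefix_length_le (l₃ := v) ?_ ?_ hmax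
          · exact (u.prefix_append [x]).trans hu
          · exact (u'.prefix_append [x]).trans hu'
        have : (psi u).length ≤ L := (psi_prefix_mono hup).length_le
        simp at hul
        omega
    rw [hlen]
    simp [mm, hl, ← hL]
    omega

end S10y

namespace S10z
open S10 S10x S10y

def stp (s : ℕ × ℕ) (x : Bool) : ℕ × ℕ := if x then (s.1 + s.2, s.2) else (s.1, s.1 + s.2)

def pq (v : List Bool) : ℕ × ℕ := v.foldl stp (1, 1)

lemma stp_true (s : ℕ × ℕ) : stp s true = (s.1 + s.2, s.2) := rfl
lemma stp_false (s : ℕ × ℕ) : stp s false = (s.1, s.1 + s.2) := rfl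

lemma pq_concat (v : List Bool) (x : Bool) : pq (v ++ [x]) = stp (pq v) x := by
  simp [pq, List.foldl_append]

lemma inv (v : List Bool) :
    (psi v).length + 2 = (pq v).1 + (pq v).2 ∧
    (pq v).1 + mm v false = (psi v).length + 1 ∧
    (pq v).2 + mm v true = (psi v).length + 1 := by
  induction v using List.reverseRecOn with
  | nil => refine ⟨rfl, rfl, rfl⟩
  | append_singleton v x ih =>
    obtain ⟨i1, i2, i3⟩ := ih
    have j := psi_concat_length v x
    rw [pq_concat]
    cases x with
    | false =>
      have m1 := mm_concat_same v false
      have m2 := mm_concat_ne v true false (by simp)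
      rw [stp_false, m1, m2]
      refine ⟨by simp; omega, by simp; omega, by simp; omega⟩
    | true =>
      have m1 := mm_concat_same v true
      have m2 := mm_concat_ne v false true (by simp)
      rw [stp_true, m1, m2]
      refine ⟨by simp; omega, by simp; omega, by simp; omega⟩

lemma fibF_pos : ∀ n, 1 ≤ fibF n
  | 0 => le_refl 1
  | 1 => le_refl 1
  | n + 2 => by have := fibF_pos (n + 1); rw [fibF]; omega

lemma fibF_lt (n : ℕ) (h : 1 ≤ n) : fibF n < fibF (n + 1) := by
  cases n with
  | zero => omega
  | succ k =>
    have := fibF_pos k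
    rw [show fibF (k + 2) = fibF (k + 1) + fibF k from rfl]
    omega

lemma fibF_le (n : ℕ) : fibF n ≤ fibF (n + 1) := by
  cases n with
  | zero => exact Nat.le_of_eq rfl
  | succ k => exact le_of_lt (fibF_lt (k + 1) (by omega))

lemma vN_length (n : ℕ) : (vN n).length = n := by simp [vN]

lemma vN_concat (n : ℕ) : vN (n + 1) = vN n ++ [decide (n % 2 = 1)] := by
  simp [vN, List.range_succ]

lemma E_concat (v : List Bool) (x : Bool) : E (v ++ [x]) = E v ++ [!x] := by simp [E]

lemma pq_vN (n : ℕ) :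
    pq (vN n) = if n % 2 = 0 then (fibF (n + 1), fibF n) else (fibF n, fibF (n + 1)) := by
  induction n with
  | zero => rfl
  | succ n ih =>
    rw [vN_concat, pq_concat, ih]
    have hf : fibF (n + 1 + 1) = fibF (n + 1) + fibF n := rfl
    by_cases h : n % 2 = 0
    · have h1 : ¬ ((n + 1) % 2 = 0) := by omega
      have hd : decide (n % 2 = 1) = false := by simp; omega
      rw [if_pos h, hd, stp_false, if_neg h1]
      simp [Prod.ext_iff]
      omega
    · have h1 : (n + 1) % 2 = 0 := by omega
      have hd : decide (n % 2 = 1) = true := by simp; omega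
      rw [if_neg h, hd, stp_true, if_pos h1]
      simp [Prod.ext_iff]
      omega

lemma foldl_swap : ∀ (v : List Bool) (p q : ℕ),
    List.foldl stp (p, q) (v.map (!·)) = Prod.swap (List.foldl stp (q, p) v) := by
  intro v
  induction v with
  | nil => intro p q; rfl
  | cons x v ih =>
    intro p q
    cases x
    · simp only [List.map_cons, List.foldl_cons, Bool.not_false]
      rw [show stp (p, q) true = (p + q, q) from rfl,
        show stp (q, p) false = (q, q + p) from rfl, ih, Nat.add_comm q p]
    · simp only [List.map_cons, List.foldl_cons, Bool.not_true]
      rw [show stp (p, q) false = (p, p + q) from rfl,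
        show stp (q, p) true = (q + p, p) from rfl, ih, Nat.add_comm q p]

lemma pq_E (v : List Bool) : pq (E v) = ((pq v).2, (pq v).1) := by
  have := foldl_swap v 1 1
  simpa [pq, E, Prod.swap] using this

end S10z

namespace S10w
open S10 S10x S10y S10z

lemma pq_main (v : List Bool) :
    (pq v).1 ≤ fibF (v.length + 1) ∧ (pq v).2 ≤ fibF (v.length + 1) ∧
    (pq v).1 + (pq v).2 ≤ fibF (v.length + 2) ∧
    ((pq v).1 + (pq v).2 = fibF (v.length + 2) → v = vN v.length ∨ v = E (vN v.length)) := by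
  induction v using List.reverseRecOn with
  | nil =>
    refine ⟨Nat.le_of_eq rfl, Nat.le_of_eq rfl, Nat.le_of_eq rfl, fun _ => Or.inl rfl⟩
  | append_singleton v x ih =>
    obtain ⟨ih1, ih2, ih3, ih4⟩ := ih
    have hlen : (v ++ [x]).length = v.length + 1 := by simp
    have hf23 : fibF (v.length + 1 + 1) = fibF (v.length + 1) + fibF v.length := rfl
    have hf34 : fibF (v.length + 1 + 2) = fibF (v.length + 1 + 1) + fibF (v.length + 1) := rfl
    have hfp0 := fibF_pos v.length
    have hfp1 := fibF_pos (v.length + 1)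
    have hfe : fibF (v.length + 2) = fibF (v.length + 1 + 1) := rfl
    rw [pq_concat, hlen]
    cases x with
    | false =>
      rw [stp_false]
      refine ⟨by simp; omega, by simp; omega, by simp; omega, ?_⟩
      intro heq
      simp only [Prod.fst, Prod.snd] at heq
      have hkey : (pq v).1 = fibF (v.length + 1) ∧
          (pq v).1 + (pq v).2 = fibF (v.length + 2) := by
        have : fibF (v.length + 2) = fibF (v.length + 1 + 1) := rfl
        omega
      rcases ih4 hkey.2 with hv | hv
      · by_cases hn : v.length % 2 = 0
        · left
          have hd : decide (v.length % 2 = 1) = false := by simp; omega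
          rw [vN_concat, hd, ← hv]
        · exfalso
          have hp : (pq v).1 = fibF v.length := by
            conv_lhs => rw [hv, pq_vN, if_neg hn]
          have := fibF_lt v.length (by omega)
          omega
      · by_cases hn : v.length % 2 = 0
        · left
          have hp : (pq v).1 = fibF v.length := by
            conv_lhs => rw [hv, pq_E, pq_vN, if_pos hn]
          have hn0 : v.length = 0 := by
            by_contra h0
            have := fibF_lt v.length (by omega)
            omega
          have hv0 : v = [] := List.length_eq_zero_iff.mp hn0
          rw [hv0]
          decide
        · right
          have hd : decide (v.length % 2 = 1) = true := by simp; omega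
          rw [vN_concat, hd, E_concat, ← hv]
          rfl
    | true =>
      rw [stp_true]
      refine ⟨by simp; omega, by simp; omega, by simp; omega, ?_⟩
      intro heq
      simp only [Prod.fst, Prod.snd] at heq
      have hkey : (pq v).2 = fibF (v.length + 1) ∧
          (pq v).1 + (pq v).2 = fibF (v.length + 2) := by
        have : fibF (v.length + 2) = fibF (v.length + 1 + 1) := rfl
        omega
      rcases ih4 hkey.2 with hv | hv
      · by_cases hn : v.length % 2 = 0
        · right
          have hq : (pq v).2 = fibF v.length := by
            conv_lhs => rw [hv, pq_vN, if_pos hn]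
          have hn0 : v.length = 0 := by
            by_contra h0
            have := fibF_lt v.length (by omega)
            omega
          have hv0 : v = [] := List.length_eq_zero_iff.mp hn0
          rw [hv0]
          decide
        · left
          have hd : decide (v.length % 2 = 1) = true := by simp; omega
          rw [vN_concat, hd, ← hv]
      · by_cases hn : v.length % 2 = 0
        · right
          have hd : decide (v.length % 2 = 1) = false := by simp; omega
          rw [vN_concat, hd, E_concat, ← hv]
          rfl
        · exfalso
          have hq : (pq v).2 = fibF v.length := by
            conv_lhs => rw [hv, pq_E, pq_vN, if_neg hn]
          have := fibF_lt v.length (by omega)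
          omega

theorem stmt10' (n : ℕ) (v : List Bool) (hv : v.length = n) :
    (psi v).length ≤ (psi (vN n)).length ∧
    (psi (vN n)).length = fibF (n + 2) - 2 ∧
    ((psi v).length = (psi (vN n)).length ↔ v = vN n ∨ v = E (vN n)) := by
  obtain ⟨a1, a2, a3⟩ := inv v
  obtain ⟨b1, b2, b3⟩ := inv (vN n)
  have hsum : (pq (vN n)).1 + (pq (vN n)).2 = fibF (n + 2) := by
    have hf : fibF (n + 2) = fibF (n + 1) + fibF n := rfl
    rw [pq_vN]
    by_cases h : n % 2 = 0
    · rw [if_pos h]; simp; omega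
    · rw [if_neg h]; simp; omega
  obtain ⟨m1, m2, m3, m4⟩ := pq_main v
  rw [hv] at m1 m2 m3 m4
  refine ⟨by omega, by omega, ?_, ?_⟩
  · intro h
    exact m4 (by omega)
  · intro h
    rcases h with h | h
    · rw [h]
    · have h1 : (pq v).1 = (pq (vN n)).2 := by rw [h, pq_E]
      have h2 : (pq v).2 = (pq (vN n)).1 := by rw [h, pq_E]
      omega

end S10w


theorem stmt10 (n : ℕ) (v : List Bool) (hv : v.length = n) :
    (psi v).length ≤ (psi (vN n)).length ∧
    (psi (vN n)).length = fibF (n + 2) - 2 ∧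
    ((psi v).length = (psi (vN n)).length ↔ v = vN n ∨ v = E (vN n)) := S10w.stmt10' n v hv
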